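/- For all integers r ≥ 1 and s ≥ 3, the linear map Φ defined by Φ(λ^1,…,λ^{s-1},ν) = (λ^1 − (|λ^1|/r)·ω_r, …, λ^{s-1} − (|λ^{s-1}|/r)·ω_r, −w_0ν + (|ν|/r)·ω_r) maps C_{SL_r}^s bijectively onto Γ_r(s), and its inverse on Γ_r(s) is given by Ψ(λ^1,…,λ^s) = (λ^1 − λ^1_r·ω_r, …, λ^{s-1} − λ^{s-1}_r·ω_r, −w_0λ^s − (Σ_{j=1}^{s-1} λ^j_r)·ω_r). -/

import Mathlib

open Matrix Polynomial BigOperators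
open scoped ComplexOrder

noncomputable section

/-- A Hermitian `r × r` complex matrix `A` has eigenvalues `μ` (listed with
multiplicity): `A` is Hermitian and its characteristic polynomial is
`∏ i, (X - μ i)`. -/
def HasEigenvalues {r : ℕ} (A : Matrix (Fin r) (Fin r) ℂ) (μ : Fin r → ℝ) : Prop :=
  A.IsHermitian ∧ A.charpoly = ∏ i, (X - Polynomial.C (μ i : ℂ))

/-- A tuple `(λ¹, …, λ^{s-1}, ν)` of real `r`-sequences. -/
abbrev Tup (r s : ℕ) := (Fin (s - 1) → Fin r → ℝ) × (Fin r → ℝ)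

/-- The Hermitian eigencone `C_r^s`: tuples of nonincreasing sequences that are the
eigenvalues of Hermitian matrices `A₁, …, A_{s-1}, C` with `A₁ + ⋯ + A_{s-1} = C`. -/
def memC (r s : ℕ) (x : Tup r s) : Prop :=
  (∀ j, Antitone (x.1 j)) ∧ Antitone x.2 ∧
  ∃ (A : Fin (s - 1) → Matrix (Fin r) (Fin r) ℂ) (B : Matrix (Fin r) (Fin r) ℂ),
    (∀ j, HasEigenvalues (A j) (x.1 j)) ∧ HasEigenvalues B x.2 ∧ (∑ j, A j) = B

/-- The majorized eigencone `EqC_r^s`: as above but `A₁ + ⋯ + A_{s-1} - C` is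
positive semidefinite. -/
def memEqC (r s : ℕ) (x : Tup r s) : Prop :=
  (∀ j, Antitone (x.1 j)) ∧ Antitone x.2 ∧
  ∃ (A : Fin (s - 1) → Matrix (Fin r) (Fin r) ℂ) (B : Matrix (Fin r) (Fin r) ℂ),
    (∀ j, HasEigenvalues (A j) (x.1 j)) ∧ HasEigenvalues B x.2 ∧ ((∑ j, A j) - B).PosSemidef

/-- The last (`r`-th) entry of an `r`-sequence. -/
def lastEntry {r : ℕ} (μ : Fin r → ℝ) : ℝ :=
  if h : 0 < r then μ ⟨r - 1, by omega⟩ else 0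

/-- `LR_r^s = {x ∈ C_r^s : λ^j_r ≥ 0 for all j}`. -/
def memLR (r s : ℕ) (x : Tup r s) : Prop :=
  memC r s x ∧ ∀ j, 0 ≤ lastEntry (x.1 j)

/-- `C_{SL_r}^s = {x ∈ C_r^s : λ^j_r = 0 for all j}`. -/
def memCSL (r s : ℕ) (x : Tup r s) : Prop :=
  memC r s x ∧ ∀ j, lastEntry (x.1 j) = 0

/-- `EqLR_r^s = {x ∈ EqC_r^s : λ^j_r ≥ 0 and λ^j_i ≤ ν_i for all i, j}`. -/
def memEqLR (r s : ℕ) (x : Tup r s) : Prop :=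
  memEqC r s x ∧ (∀ j, 0 ≤ lastEntry (x.1 j)) ∧ ∀ j i, x.1 j i ≤ x.2 i

/-- `ω_k ∈ ℝ^r`: first `k` entries equal `1`, the rest `0`. -/
def omegaVec (r k : ℕ) : Fin r → ℝ := fun i => if (i : ℕ) < k then 1 else 0

/-- `x_j ∈ (ℝ^r)^s`: `ω_r` in the `j`-th and last positions, `0` elsewhere. -/
def xvec (r s : ℕ) (j : Fin (s - 1)) : Tup r s :=
  (fun k => if k = j then omegaVec r r else 0, omegaVec r r)

/-- A nonzero `x` in a cone `K` spans an extremal ray of `K` if whenever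
`x = y + z` with `y, z ∈ K`, both `y` and `z` are nonnegative multiples of `x`. -/
def IsExtremalRay {M : Type*} [AddCommMonoid M] [Module ℝ M] (K : Set M) (x : M) : Prop :=
  x ≠ 0 ∧ x ∈ K ∧ ∀ y z, y ∈ K → z ∈ K → x = y + z →
    (∃ c : ℝ, 0 ≤ c ∧ y = c • x) ∧ (∃ c : ℝ, 0 ≤ c ∧ z = c • x)

/-- `|μ| = μ₁ + ⋯ + μ_r`. -/
def totalSum {r : ℕ} (μ : Fin r → ℝ) : ℝ := ∑ i, μ i

/-- `w₀`: the reversal map `w₀(μ₁,…,μ_r) = (μ_r,…,μ₁)`. -/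
def w0 {r : ℕ} (μ : Fin r → ℝ) : Fin r → ℝ := fun i => μ i.rev

/-- `Γ_r(s)`: tuples `(λ¹,…,λ^s)` with every `|λ^j| = 0` and
`(λ¹,…,λ^{s-1}, -w₀λ^s) ∈ C_r^s`. -/
def memGamma (r s : ℕ) (x : Tup r s) : Prop :=
  (∀ j, totalSum (x.1 j) = 0) ∧ totalSum x.2 = 0 ∧
    memC r s (x.1, fun i => -(w0 x.2 i))

/-- `Φ(λ¹,…,λ^{s-1},ν) = (λ¹ - (|λ¹|/r)ω_r, …, λ^{s-1} - (|λ^{s-1}|/r)ω_r,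
-w₀ν + (|ν|/r)ω_r)`. -/
def PhiMap (r s : ℕ) (x : Tup r s) : Tup r s :=
  (fun j => x.1 j - (totalSum (x.1 j) / r) • omegaVec r r,
   (fun i => -(w0 x.2 i)) + (totalSum x.2 / r) • omegaVec r r)

/-- `Ψ(λ¹,…,λ^s) = (λ¹ - λ¹_r ω_r, …, λ^{s-1} - λ^{s-1}_r ω_r,
-w₀λ^s - (∑_j λ^j_r) ω_r)`. -/
def PsiMap (r s : ℕ) (x : Tup r s) : Tup r s :=
  (fun j => x.1 j - lastEntry (x.1 j) • omegaVec r r,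
   (fun i => -(w0 x.2 i)) - (∑ j, lastEntry (x.1 j)) • omegaVec r r)

lemma smul_one_herm (r : ℕ) (c : ℝ) : ((c : ℂ) • (1 : Matrix (Fin r) (Fin r) ℂ)).IsHermitian := by
  simp [Matrix.IsHermitian, Matrix.conjTranspose_smul, Complex.conj_ofReal]

lemma hasEig_shift {r : ℕ} {A : Matrix (Fin r) (Fin r) ℂ} {μ : Fin r → ℝ} (c : ℝ)
    (h : HasEigenvalues A μ) :
    HasEigenvalues (A - (c : ℂ) • 1) (fun i => μ i - c) := by
  obtain ⟨hH, hcp⟩ := h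
  refine ⟨hH.sub (smul_one_herm r c), ?_⟩
  set φ : ℂ[X] →+* ℂ[X] := (aeval (X + C (c : ℂ))).toRingHom with hφ
  have hcm : charmatrix (A - (c : ℂ) • 1) = (charmatrix A).map φ := by
    ext i j
    by_cases hij : i = j
    · subst hij
      simp [charmatrix_apply_eq, hφ, Matrix.one_apply, map_sub, aeval_X, aeval_C]
      ring
    · simp [charmatrix_apply_ne _ _ _ hij, hφ, Matrix.one_apply, hij]
  have : (A - (c : ℂ) • 1).charpoly = φ A.charpoly := by
    rw [Matrix.charpoly, hcm, Matrix.charpoly, RingHom.map_det]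
    rfl
  rw [this, hcp, map_prod]
  refine Finset.prod_congr rfl fun i _ => ?_
  simp [hφ, map_sub, aeval_X, aeval_C]
  ring

lemma trace_of_hasEig {r : ℕ} (hr : 1 ≤ r) {A : Matrix (Fin r) (Fin r) ℂ} {μ : Fin r → ℝ}
    (h : HasEigenvalues A μ) : A.trace = ((∑ i, μ i : ℝ) : ℂ) := by
  have : Nonempty (Fin r) := ⟨⟨0, hr⟩⟩
  have hc := Polynomial.prod_X_sub_C_coeff_card_pred Finset.univ (fun i : Fin r => (μ i : ℂ))
      (by simp; omega)
  rw [Matrix.trace_eq_neg_charpoly_coeff, h.2, Fintype.card_fin]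
  simp only [Finset.card_univ, Fintype.card_fin] at hc
  rw [hc]
  simp

lemma omega_all {r : ℕ} (i : Fin r) : omegaVec r r i = 1 := by
  simp [omegaVec, i.isLt]

lemma sum_rev {r : ℕ} (f : Fin r → ℝ) : ∑ i : Fin r, f i.rev = ∑ i : Fin r, f i :=
  Fintype.sum_equiv Fin.revPerm (fun i : Fin r => f i.rev) f (fun _ => rfl)

lemma antitone_shift {r : ℕ} {f : Fin r → ℝ} (hf : Antitone f) (c : ℝ) :
    Antitone (f - c • omegaVec r r) := by
  intro a b h
  simp only [Pi.sub_apply, Pi.smul_apply, smul_eq_mul, omega_all, mul_one]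
  exact sub_le_sub_right (hf h) c

lemma hasEig_shift' {r : ℕ} {A : Matrix (Fin r) (Fin r) ℂ} {μ : Fin r → ℝ} (c : ℝ)
    (h : HasEigenvalues A μ) :
    HasEigenvalues (A - (c : ℂ) • 1) (μ - c • omegaVec r r) := by
  have hfun : (μ - c • omegaVec r r) = fun i => μ i - c := by
    funext i; simp [omega_all]
  rw [hfun]
  exact hasEig_shift c h

lemma memC_shift (r s : ℕ) (x : Tup r s) (c : Fin (s - 1) → ℝ) (hx : memC r s x) :
    memC r s (fun j => x.1 j - c j • omegaVec r r, x.2 - (∑ j, c j) • omegaVec r r) := by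
  obtain ⟨h1, h2, A, B, hA, hB, hsum⟩ := hx
  refine ⟨fun j => antitone_shift (h1 j) _, antitone_shift h2 _,
    fun j => A j - ((c j : ℝ) : ℂ) • 1, B - (((∑ j, c j : ℝ)) : ℂ) • 1,
    fun j => hasEig_shift' _ (hA j), hasEig_shift' _ hB, ?_⟩
  rw [Finset.sum_sub_distrib, hsum]
  congr 1
  rw [← Finset.sum_smul]
  norm_cast

lemma memC_trace {r s : ℕ} (hr : 1 ≤ r) {x : Tup r s} (hx : memC r s x) :
    ∑ j, totalSum (x.1 j) = totalSum x.2 := by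
  obtain ⟨-, -, A, B, hA, hB, hsum⟩ := hx
  have key : ∑ j, ((totalSum (x.1 j) : ℝ) : ℂ) = ((totalSum x.2 : ℝ) : ℂ) :=
    calc ∑ j, ((totalSum (x.1 j) : ℝ) : ℂ) = ∑ j, (A j).trace :=
          Finset.sum_congr rfl fun j _ => (trace_of_hasEig hr (hA j)).symm
      _ = (∑ j, A j).trace := by rw [Matrix.trace_sum]
      _ = B.trace := by rw [hsum]
      _ = _ := trace_of_hasEig hr hB
  exact_mod_cast key

/-- `Φ` maps `C_{SL_r}^s` bijectively onto `Γ_r(s)`, with inverse `Ψ`. -/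
theorem stmt3 (r s : ℕ) (hr : 1 ≤ r) (hs : 3 ≤ s) :
    (∀ x : Tup r s, memCSL r s x → memGamma r s (PhiMap r s x)) ∧
    (∀ x : Tup r s, memCSL r s x → PsiMap r s (PhiMap r s x) = x) ∧
    (∀ y : Tup r s, memGamma r s y →
      memCSL r s (PsiMap r s y) ∧ PhiMap r s (PsiMap r s y) = y) := by
  have hrpos : (0 : ℝ) < (r : ℝ) := by exact_mod_cast hr
  have hr0 : (r : ℝ) ≠ 0 := hrpos.ne'
  have hrnat : 0 < r := hr
  have hlast : ∀ (μ : Fin r → ℝ), lastEntry μ = μ ⟨r - 1, by omega⟩ := fun μ => dif_pos hrnat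
  refine ⟨?_, ?_, ?_⟩
  · -- Part 1: Φ maps CSL into Γ
    rintro x ⟨hC, hz⟩
    have htr := memC_trace hr hC
    have hst : ∑ j, totalSum (x.1 j) / (r : ℝ) = totalSum x.2 / r := by
      rw [← Finset.sum_div, htr]
    refine ⟨?_, ?_, ?_⟩
    · intro j
      simp only [PhiMap, totalSum, Pi.sub_apply, Pi.smul_apply, smul_eq_mul, omega_all,
        mul_one, Finset.sum_sub_distrib, Finset.sum_const, Finset.card_univ, Fintype.card_fin,
        nsmul_eq_mul]
      field_simp
      ring
    · simp only [PhiMap, totalSum, Pi.add_apply, Pi.smul_apply, smul_eq_mul, omega_all,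
        mul_one, Finset.sum_add_distrib, Finset.sum_neg_distrib, Finset.sum_const,
        Finset.card_univ, Fintype.card_fin, nsmul_eq_mul, w0]
      rw [sum_rev]
      field_simp
      ring
    · have hkey : ((PhiMap r s x).1, fun i => -(w0 (PhiMap r s x).2 i)) =
          ((fun j => x.1 j - (totalSum (x.1 j) / r) • omegaVec r r,
            x.2 - (∑ j, totalSum (x.1 j) / (r : ℝ)) • omegaVec r r) : Tup r s) := by
        refine Prod.ext rfl ?_
        funext i
        simp only [PhiMap, w0, Pi.add_apply, Pi.smul_apply, smul_eq_mul, omega_all, mul_one,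
          Fin.rev_rev, Pi.sub_apply, hst]
        ring
      rw [hkey]
      exact memC_shift r s x _ hC
  · -- Part 2: Ψ ∘ Φ = id on CSL
    rintro x ⟨hC, hz⟩
    have htr := memC_trace hr hC
    have hlastPhi : ∀ j, lastEntry ((PhiMap r s x).1 j) = -(totalSum (x.1 j) / r) := by
      intro j
      have hzj : x.1 j ⟨r - 1, by omega⟩ = 0 := by
        have := hz j; rwa [hlast] at this
      rw [hlast]
      simp [PhiMap, omega_all, hzj]
    refine Prod.ext ?_ ?_
    · funext j i
      simp only [PsiMap, hlastPhi]
      simp only [PhiMap, Pi.sub_apply, Pi.smul_apply, smul_eq_mul, omega_all, mul_one]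
      ring
    · funext i
      have hsl : ∑ j, lastEntry ((PhiMap r s x).1 j) = -(totalSum x.2 / r) := by
        rw [Finset.sum_congr rfl fun j _ => hlastPhi j]
        rw [Finset.sum_neg_distrib, ← Finset.sum_div, htr]
      simp only [PsiMap, hsl]
      simp only [PhiMap, w0, Pi.sub_apply, Pi.add_apply, Pi.smul_apply,
        smul_eq_mul, omega_all, mul_one, Fin.rev_rev]
      ring
  · -- Part 3
    rintro y ⟨hz1, hz2, hC⟩
    have hmemPsi : memC r s (PsiMap r s y) := by
      have := memC_shift r s (y.1, fun i => -(w0 y.2 i)) (fun j => lastEntry (y.1 j)) hC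
      exact this
    have hlastPsi : ∀ j, lastEntry ((PsiMap r s y).1 j) = 0 := by
      intro j
      rw [hlast]
      simp only [PsiMap, Pi.sub_apply, Pi.smul_apply, smul_eq_mul, omega_all, mul_one]
      rw [← hlast (y.1 j), sub_self]
    refine ⟨⟨hmemPsi, hlastPsi⟩, ?_⟩
    have htot1 : ∀ j, totalSum ((PsiMap r s y).1 j) = -((r : ℝ) * lastEntry (y.1 j)) := by
      intro j
      simp only [PsiMap, totalSum, Pi.sub_apply, Pi.smul_apply, smul_eq_mul, omega_all,
        mul_one, Finset.sum_sub_distrib, Finset.sum_const, Finset.card_univ,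
        Fintype.card_fin, nsmul_eq_mul]
      have := hz1 j
      rw [totalSum] at this
      rw [this]
      ring
    have htot2 : totalSum ((PsiMap r s y).2) = -((r : ℝ) * ∑ j, lastEntry (y.1 j)) := by
      simp only [PsiMap, totalSum, Pi.sub_apply, Pi.smul_apply, smul_eq_mul, omega_all,
        mul_one, Finset.sum_sub_distrib, Finset.sum_neg_distrib, Finset.sum_const,
        Finset.card_univ, Fintype.card_fin, nsmul_eq_mul, w0]
      rw [sum_rev]
      have := hz2
      rw [totalSum] at this
      rw [this]
      ring
    refine Prod.ext ?_ ?_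
    · funext j i
      simp only [PhiMap, htot1]
      simp only [PsiMap, Pi.sub_apply, Pi.smul_apply, smul_eq_mul, omega_all, mul_one]
      field_simp
      ring
    · funext i
      simp only [PhiMap, htot2]
      simp only [PsiMap, w0, Pi.sub_apply, Pi.add_apply, Pi.smul_apply,
        smul_eq_mul, omega_all, mul_one, Fin.rev_rev]
      field_simp
      ring
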